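/- arXiv:0712.3956 — 2 statements merged into one kernel-verified Lean document; each statement's English description precedes it below -/
import Mathlib

section
/- Let G be a connected α-critical graph with at least 4 vertices, and let u be a vertex of G with exactly two neighbors v and w. Then the only common neighbor of v and w is u. -/
open SimpleGraph

variable {V : Type*}

/-- The maximum size of an independent (stable) set of a simple graph. -/
noncomputable def alpha (G : SimpleGraph V) : ℕ :=
  sSup {n | ∃ s : Finset V, (∀ x ∈ s, ∀ y ∈ s, ¬ G.Adj x y) ∧ s.card = n}

/-- A graph is α-critical if deleting any edge increases α. -/
def AlphaCritical (G : SimpleGraph V) : Prop :=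
  ∀ x y : V, G.Adj x y → alpha G < alpha (G.deleteEdges {s(x, y)})

/-- `G` contains a totally odd K₄-subdivision: four distinct branch vertices joined by
six internally disjoint paths of odd length. -/
def HasTOK4 (G : SimpleGraph V) : Prop :=
  ∃ b : Fin 4 → V, Function.Injective b ∧
  ∃ P : ∀ i j : Fin 4, G.Walk (b i) (b j),
    (∀ i j, i ≠ j → (P i j).IsPath) ∧
    (∀ i j, i ≠ j → Odd (P i j).length) ∧
    (∀ i j k l : Fin 4, i ≠ j → k ≠ l → s(i, j) ≠ s(k, l) →
      ∀ v : V, v ∈ (P i j).support → v ∈ (P k l).support →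
        (v = b i ∨ v = b j) ∧ (v = b k ∨ v = b l))

/-- `G` is (isomorphic to) a totally odd K₄-subdivision: it has one that uses all
vertices and all edges of `G`. -/
def IsTOK4 (G : SimpleGraph V) : Prop :=
  ∃ b : Fin 4 → V, Function.Injective b ∧
  ∃ P : ∀ i j : Fin 4, G.Walk (b i) (b j),
    (∀ i j, i ≠ j → (P i j).IsPath) ∧
    (∀ i j, i ≠ j → Odd (P i j).length) ∧
    (∀ i j k l : Fin 4, i ≠ j → k ≠ l → s(i, j) ≠ s(k, l) →
      ∀ v : V, v ∈ (P i j).support → v ∈ (P k l).support →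
        (v = b i ∨ v = b j) ∧ (v = b k ∨ v = b l)) ∧
    (∀ v : V, ∃ i j, i ≠ j ∧ v ∈ (P i j).support) ∧
    (∀ e ∈ G.edgeSet, ∃ i j, i ≠ j ∧ e ∈ (P i j).edges)

/-- `G` is an odd cycle: a cycle of odd length passing through all vertices
and using all edges of `G`. -/
def IsOddCycle (G : SimpleGraph V) : Prop :=
  ∃ (v : V) (w : G.Walk v v), w.IsCycle ∧ Odd w.length ∧
    (∀ u : V, u ∈ w.support) ∧ (∀ e ∈ G.edgeSet, e ∈ w.edges)

/-- `G` is isomorphic to the complete graph on one vertex. -/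
def IsK1 (G : SimpleGraph V) : Prop := Nonempty (G ≃g (⊤ : SimpleGraph (Fin 1)))

/-- `G` is isomorphic to the complete graph on two vertices. -/
def IsK2 (G : SimpleGraph V) : Prop := Nonempty (G ≃g (⊤ : SimpleGraph (Fin 2)))


lemma alpha_bddAbove {V : Type*} [Fintype V] (G : SimpleGraph V) :
    BddAbove {n | ∃ s : Finset V, (∀ x ∈ s, ∀ y ∈ s, ¬ G.Adj x y) ∧ s.card = n} :=
  ⟨Fintype.card V, by rintro n ⟨s, -, rfl⟩; exact s.card_le_univ⟩

lemma card_le_alpha {V : Type*} [Fintype V] {G : SimpleGraph V} {s : Finset V}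
    (hs : ∀ x ∈ s, ∀ y ∈ s, ¬ G.Adj x y) : s.card ≤ alpha G :=
  le_csSup (alpha_bddAbove G) ⟨s, hs, rfl⟩

theorem stmt_3 {V : Type*} [Fintype V] (G : SimpleGraph V) (hconn : G.Connected)
    (hG : AlphaCritical G) (hcard : 4 ≤ Fintype.card V) (u v w : V) (hvw : v ≠ w)
    (hN : G.neighborSet u = {v, w}) :
    ∀ x : V, G.Adj v x → G.Adj w x → x = u := by
  intro x hvx hwx
  by_contra hxu
  classical
  have huv : G.Adj u v := by rw [← SimpleGraph.mem_neighborSet, hN]; left; rfl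
  have huw : G.Adj u w := by rw [← SimpleGraph.mem_neighborSet, hN]; right; rfl
  set G' := G.deleteEdges {s(v, x)} with hG'
  have hlt : alpha G < alpha G' := hG v x hvx
  have hne : {n | ∃ s : Finset V, (∀ a ∈ s, ∀ b ∈ s, ¬ G'.Adj a b) ∧ s.card = n}.Nonempty :=
    ⟨0, ∅, by simp, rfl⟩
  obtain ⟨S, hSind, hScard⟩ : ∃ s : Finset V,
      (∀ a ∈ s, ∀ b ∈ s, ¬ G'.Adj a b) ∧ s.card = alpha G' :=
    Nat.sSup_mem hne (alpha_bddAbove G')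
  have key : ∀ a ∈ S, ∀ b ∈ S, G.Adj a b → s(a, b) = s(v, x) := by
    intro a ha b hb hab
    have h := hSind a ha b hb
    rw [hG', SimpleGraph.deleteEdges_adj] at h
    push_neg at h
    simpa using h hab
  have hvS : v ∈ S := by
    by_contra hvS
    have : ∀ a ∈ S, ∀ b ∈ S, ¬ G.Adj a b := by
      intro a ha b hb hab
      have h := key a ha b hb hab
      rw [Sym2.eq_iff] at h
      rcases h with ⟨rfl, rfl⟩ | ⟨rfl, rfl⟩
      · exact hvS ha
      · exact hvS hb
    have := card_le_alpha this
    omega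
  have hxS : x ∈ S := by
    by_contra hxS
    have : ∀ a ∈ S, ∀ b ∈ S, ¬ G.Adj a b := by
      intro a ha b hb hab
      have h := key a ha b hb hab
      rw [Sym2.eq_iff] at h
      rcases h with ⟨rfl, rfl⟩ | ⟨rfl, rfl⟩
      · exact hxS hb
      · exact hxS ha
    have := card_le_alpha this
    omega
  have huS : u ∉ S := by
    intro huS
    have h := key u huS v hvS huv
    rw [Sym2.eq_iff] at h
    rcases h with ⟨h1, h2⟩ | ⟨h1, h2⟩
    · exact hvx.ne h2
    · exact hxu h1.symm
  have hwS : w ∉ S := by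
    intro hwS
    have h := key w hwS x hxS hwx
    rw [Sym2.eq_iff] at h
    rcases h with ⟨h1, h2⟩ | ⟨h1, h2⟩
    · exact hvw h1.symm
    · exact hwx.ne h1
  set T : Finset V := insert u (S.erase v) with hT
  have hTind : ∀ a ∈ T, ∀ b ∈ T, ¬ G.Adj a b := by
    intro a ha b hb hab
    rw [hT, Finset.mem_insert] at ha hb
    rcases ha with rfl | ha
    · rcases hb with rfl | hb
      · exact hab.ne rfl
      · have hbn : b ∈ G.neighborSet a := hab
        rw [hN] at hbn
        rcases hbn with rfl | rfl
        · exact (Finset.mem_erase.mp hb).1 rfl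
        · exact hwS (Finset.mem_erase.mp hb).2
    · rcases hb with rfl | hb
      · have han : a ∈ G.neighborSet b := hab.symm
        rw [hN] at han
        rcases han with rfl | rfl
        · exact (Finset.mem_erase.mp ha).1 rfl
        · exact hwS (Finset.mem_erase.mp ha).2
      · obtain ⟨hav, haS⟩ := Finset.mem_erase.mp ha
        obtain ⟨hbv, hbS⟩ := Finset.mem_erase.mp hb
        have h := key a haS b hbS hab
        rw [Sym2.eq_iff] at h
        rcases h with ⟨rfl, rfl⟩ | ⟨rfl, rfl⟩
        · exact hav rfl
        · exact hbv rfl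
  have huT : u ∉ S.erase v := fun h => huS (Finset.mem_erase.mp h).2
  have hTcard : T.card = S.card := by
    rw [hT, Finset.card_insert_of_notMem huT, Finset.card_erase_of_mem hvS]
    have : 1 ≤ S.card := Finset.card_pos.mpr ⟨v, hvS⟩
    omega
  have := card_le_alpha hTind
  omega
end

section
/- Every connected α-critical graph that is not isomorphic to K₁ or K₂ and has maximum degree at most 2 is an odd cycle. -/
open SimpleGraph

variable {V : Type*}

section Aux
variable {V : Type*}

lemma le_alpha [Fintype V] (G : SimpleGraph V) (s : Finset V)
    (hs : ∀ x ∈ s, ∀ y ∈ s, ¬ G.Adj x y) : s.card ≤ alpha G := by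
  apply le_csSup
  · refine ⟨Fintype.card V, ?_⟩
    rintro n ⟨t, -, rfl⟩
    exact t.card_le_univ.trans_eq Finset.card_univ
  · exact ⟨s, hs, rfl⟩

lemma alpha_exists [Fintype V] (G : SimpleGraph V) :
    ∃ s : Finset V, (∀ x ∈ s, ∀ y ∈ s, ¬ G.Adj x y) ∧ s.card = alpha G := by
  have h := Nat.sSup_mem (s := {n | ∃ s : Finset V, (∀ x ∈ s, ∀ y ∈ s, ¬ G.Adj x y) ∧ s.card = n})
    ⟨0, ∅, by simp, by simp⟩
    ⟨Fintype.card V, by rintro n ⟨t, -, rfl⟩; exact t.card_le_univ.trans_eq Finset.card_univ⟩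
  exact h

lemma getVert_eq_support_getElem {G : SimpleGraph V} {u v : V} (p : G.Walk u v) {i : ℕ}
    (hi : i ≤ p.length) :
    p.getVert i = p.support[i]'(by rw [SimpleGraph.Walk.length_support]; omega) := by
  induction p generalizing i with
  | nil =>
    simp only [SimpleGraph.Walk.length_nil, Nat.le_zero] at hi
    subst hi
    simp
  | cons h q ih =>
    cases i with
    | zero => simp
    | succ n =>
      simp only [SimpleGraph.Walk.getVert_cons_succ, SimpleGraph.Walk.support_cons,
        List.getElem_cons_succ]
      exact ih (by simpa using hi)

lemma path_getVert_inj {G : SimpleGraph V} {u v : V} {p : G.Walk u v} (hp : p.IsPath)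
    {i j : ℕ} (hi : i ≤ p.length) (hj : j ≤ p.length) (h : p.getVert i = p.getVert j) : i = j := by
  rw [getVert_eq_support_getElem p hi, getVert_eq_support_getElem p hj] at h
  exact (List.Nodup.getElem_inj_iff hp.support_nodup).1 h

lemma interior_two_edges {G : SimpleGraph V} {x y z : V} {q : G.Walk x y}
    (hq : q.IsPath) (hz : z ∈ q.support) (hzx : z ≠ x) (hzy : z ≠ y) :
    ∃ e f : V, e ≠ f ∧ s(z, e) ∈ q.edges ∧ s(z, f) ∈ q.edges := by
  classical
  have hspec := q.take_spec hz
  have hq1 : (q.takeUntil z hz).IsPath := hq.takeUntil hz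
  obtain ⟨f, hzf, r2, hr2⟩ := SimpleGraph.Walk.exists_eq_cons_of_ne hzy (q.dropUntil z hz)
  obtain ⟨e, hze, r1, hr1⟩ := SimpleGraph.Walk.exists_eq_cons_of_ne hzx (q.takeUntil z hz).reverse
  have he1 : e ∈ (q.takeUntil z hz).support := by
    have : e ∈ (q.takeUntil z hz).reverse.support := by
      rw [hr1]
      simp [SimpleGraph.Walk.support_cons]
    rwa [SimpleGraph.Walk.support_reverse, List.mem_reverse] at this
  have hf2 : f ∈ (q.dropUntil z hz).support.tail := by
    rw [hr2]
    simp [SimpleGraph.Walk.support_cons]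
  refine ⟨e, f, ?_, ?_, ?_⟩
  · have hnodup : ((q.takeUntil z hz).support ++ (q.dropUntil z hz).support.tail).Nodup := by
      rw [← SimpleGraph.Walk.support_append, hspec]
      exact hq.support_nodup
    have hd := List.disjoint_of_nodup_append hnodup
    intro hef
    exact hd he1 (hef ▸ hf2)
  · have h1 : s(z, e) ∈ (q.takeUntil z hz).reverse.edges := by
      rw [hr1]; simp
    rw [SimpleGraph.Walk.edges_reverse, List.mem_reverse] at h1
    rw [← hspec, SimpleGraph.Walk.edges_append, List.mem_append]
    exact Or.inl h1
  · have h2 : s(z, f) ∈ (q.dropUntil z hz).edges := by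
      rw [hr2]; simp
    rw [← hspec, SimpleGraph.Walk.edges_append, List.mem_append]
    exact Or.inr h2

lemma mem_edges_getVert {G : SimpleGraph V} {u v x y : V} {p : G.Walk u v}
    (h : s(x, y) ∈ p.edges) :
    ∃ i, i < p.length ∧ ((p.getVert i = x ∧ p.getVert (i+1) = y) ∨
      (p.getVert i = y ∧ p.getVert (i+1) = x)) := by
  induction p with
  | nil => simp at h
  | cons hadj q ih =>
    rw [SimpleGraph.Walk.edges_cons, List.mem_cons] at h
    rcases h with h | h
    · refine ⟨0, by simp, ?_⟩
      rcases Sym2.eq_iff.1 h.symm with ⟨rfl, rfl⟩ | ⟨rfl, rfl⟩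
      · exact Or.inl ⟨by simp, by simp [SimpleGraph.Walk.getVert_cons_succ]⟩
      · exact Or.inr ⟨by simp, by simp [SimpleGraph.Walk.getVert_cons_succ]⟩
    · obtain ⟨i, hi, hcase⟩ := ih h
      refine ⟨i + 1, by simp; omega, ?_⟩
      simpa [SimpleGraph.Walk.getVert_cons_succ] using hcase
end Aux

theorem stmt_15 {V : Type*} [Fintype V] (G : SimpleGraph V) (hconn : G.Connected)
    (hG : AlphaCritical G) (h1 : ¬ IsK1 G) (h2 : ¬ IsK2 G)
    (hdeg : ∀ v : V, (G.neighborSet v).ncard ≤ 2) :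
    IsOddCycle G := by
  classical
  have hne : Nonempty V := hconn.nonempty
  obtain ⟨v0⟩ := hne
  -- V is nontrivial
  have hnt : ∀ v : V, ∃ z, v ≠ z := by
    by_contra h
    push_neg at h
    obtain ⟨v, hv⟩ := h
    apply h1
    refine ⟨⟨⟨fun _ => 0, fun _ => v, fun x => hv x, fun i => Subsingleton.elim _ _⟩, ?_⟩⟩
    intro c d
    simp only [Equiv.coe_fn_mk, top_adj]
    constructor
    · intro h'; exact absurd rfl h'
    · intro h'
      exact absurd ((hv c).symm.trans (hv d)) h'.ne
  -- every vertex has a neighbor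
  have hdeg1 : ∀ v : V, ∃ u, G.Adj v u := by
    intro v
    obtain ⟨z, hz⟩ := hnt v
    obtain ⟨w⟩ := hconn v z
    obtain ⟨u, h, q, -⟩ := SimpleGraph.Walk.exists_eq_cons_of_ne hz w
    exact ⟨u, h⟩
  -- every vertex has degree exactly 2
  have hd2 : ∀ v : V, (G.neighborSet v).ncard = 2 := by
    intro v
    rcases Nat.lt_or_ge (G.neighborSet v).ncard 2 with hlt | hge
    · exfalso
      obtain ⟨u, hu⟩ := hdeg1 v
      have hfin : (G.neighborSet v).Finite := Set.toFinite _
      have hpos : 0 < (G.neighborSet v).ncard := (Set.ncard_pos hfin).2 ⟨u, hu⟩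
      have h1' : (G.neighborSet v).ncard = 1 := by omega
      obtain ⟨u', hu'⟩ := Set.ncard_eq_one.1 h1'
      have huu : u' = u := by
        have : u ∈ G.neighborSet v := hu
        rw [hu'] at this
        exact this.symm
      have hnv : G.neighborSet v = {u} := by rw [hu', huu]
      clear hu' huu h1'
      by_cases hw : ∃ w, G.Adj u w ∧ w ≠ v
      · obtain ⟨w, huw, hwv⟩ := hw
        have hcrit := hG u w huw
        obtain ⟨S, hSind, hScard⟩ := alpha_exists (G.deleteEdges {s(u,w)})
        have hnotind : ¬ (∀ x ∈ S, ∀ y ∈ S, ¬ G.Adj x y) := by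
          intro hind
          have := le_alpha G S hind
          omega
        push_neg at hnotind
        obtain ⟨x, hxS, y, hyS, hxy⟩ := hnotind
        have hdel : ¬ (G.deleteEdges {s(u,w)}).Adj x y := hSind x hxS y hyS
        have hsxy : s(x,y) = s(u,w) := by
          by_contra hne'
          exact hdel (by simp [SimpleGraph.deleteEdges_adj, hxy, hne'])
        have huwS : u ∈ S ∧ w ∈ S := by
          rcases Sym2.eq_iff.1 hsxy with ⟨rfl, rfl⟩ | ⟨rfl, rfl⟩
          · exact ⟨hxS, hyS⟩
          · exact ⟨hyS, hxS⟩
        have hvS : v ∉ S := by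
          intro hvS
          apply hSind v hvS u huwS.1
          simp only [SimpleGraph.deleteEdges_adj, Set.mem_singleton_iff]
          refine ⟨hu, ?_⟩
          intro h
          rcases Sym2.eq_iff.1 h with ⟨h', -⟩ | ⟨h', -⟩
          · exact hu.ne h'
          · exact hwv h'.symm
        have hTcard : (insert v (S.erase u)).card = S.card := by
          rw [Finset.card_insert_of_notMem (fun h => hvS (Finset.mem_of_mem_erase h)),
            Finset.card_erase_of_mem huwS.1]
          have : 0 < S.card := Finset.card_pos.2 ⟨u, huwS.1⟩
          omega
        have hTind : ∀ x ∈ insert v (S.erase u), ∀ y ∈ insert v (S.erase u), ¬ G.Adj x y := by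
          intro x hx y hy hadj
          simp only [Finset.mem_insert, Finset.mem_erase] at hx hy
          rcases hx with rfl | ⟨hxu, hxS'⟩
          · rcases hy with rfl | ⟨hyu, hyS'⟩
            · exact G.irrefl hadj
            · have : y ∈ G.neighborSet x := hadj
              rw [hnv] at this
              exact hyu this
          · rcases hy with rfl | ⟨hyu, hyS'⟩
            · have : x ∈ G.neighborSet y := hadj.symm
              rw [hnv] at this
              exact hxu this
            · refine hSind x hxS' y hyS' ?_
              simp only [SimpleGraph.deleteEdges_adj, Set.mem_singleton_iff]
              refine ⟨hadj, ?_⟩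
              intro h
              rcases Sym2.eq_iff.1 h with ⟨h', -⟩ | ⟨-, h'⟩
              · exact hxu h'
              · exact hyu h'
        have := le_alpha G _ hTind
        omega
      · push_neg at hw
        apply h2
        have hclosed : ∀ (c z : V) (wk : G.Walk c z), (c = v ∨ c = u) → (z = v ∨ z = u) := by
          intro c z wk
          induction wk with
          | nil => exact id
          | cons h q ih =>
            rename_i c' d' z'
            intro hc
            apply ih
            rcases hc with rfl | rfl
            · have : d' ∈ G.neighborSet c' := h
              rw [hnv] at this
              exact Or.inr this
            · exact Or.inl (hw d' h)
        have hall : ∀ z : V, z = v ∨ z = u := by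
          intro z
          obtain ⟨wk⟩ := hconn v z
          exact hclosed v z wk (Or.inl rfl)
        have hvu : v ≠ u := hu.ne
        refine ⟨⟨⟨fun z => if z = v then 0 else 1, fun i => if i = 0 then v else u, ?_, ?_⟩, ?_⟩⟩
        · intro z
          rcases hall z with rfl | rfl
          · simp
          · simp [hvu.symm]
        · intro i
          fin_cases i
          · simp
          · simp [hvu.symm]
        · intro c d
          simp only [Equiv.coe_fn_mk, top_adj]
          rcases hall c with rfl | rfl <;> rcases hall d with rfl | rfl
          · simp [G.irrefl]
          · simp [hvu.symm, hu]
          · simp [hvu.symm, hu.symm]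
          · simp [G.irrefl]
    · exact le_antisymm (hdeg v) hge
  have hpair : ∀ v : V, ∃ u w, u ≠ w ∧ G.neighborSet v = {u, w} :=
    fun v => Set.ncard_eq_two.1 (hd2 v)
  -- longest path
  have hPSne : Set.Nonempty {n | ∃ (a b : V) (p : G.Walk a b), p.IsPath ∧ p.length = n} :=
    ⟨0, v0, v0, SimpleGraph.Walk.nil, SimpleGraph.Walk.IsPath.nil, rfl⟩
  have hPSbdd : BddAbove {n | ∃ (a b : V) (p : G.Walk a b), p.IsPath ∧ p.length = n} :=
    ⟨Fintype.card V, by rintro n ⟨a, b, p, hp, rfl⟩; exact hp.length_lt.le⟩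
  obtain ⟨a, b, p, hp, hplen⟩ := Nat.sSup_mem hPSne hPSbdd
  have hmax : ∀ (x y : V) (q : G.Walk x y), q.IsPath → q.length ≤ p.length := by
    intro x y q hq
    rw [hplen]
    exact le_csSup hPSbdd ⟨x, y, q, hq, rfl⟩
  clear hplen
  have hclose_end : ∀ (x y : V) (q : G.Walk x y), q.IsPath → q.length = p.length →
      ∀ z, G.Adj y z → z ∈ q.support := by
    intro x y q hq hqlen z hz
    by_contra hzs
    have hzs' : z ∉ q.reverse.support := by
      rwa [SimpleGraph.Walk.support_reverse, List.mem_reverse]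
    have hpath : (SimpleGraph.Walk.cons hz.symm q.reverse).IsPath := hq.reverse.cons hzs'
    have h' := hmax _ _ _ hpath
    rw [SimpleGraph.Walk.length_cons, SimpleGraph.Walk.length_reverse, hqlen] at h'
    omega
  have hN1 : 1 ≤ p.length := by
    obtain ⟨u1, hu1⟩ := hdeg1 v0
    have hp1 : (SimpleGraph.Walk.cons hu1 SimpleGraph.Walk.nil).IsPath := by
      rw [SimpleGraph.Walk.cons_isPath_iff]
      refine ⟨SimpleGraph.Walk.IsPath.nil, ?_⟩
      simp [hu1.ne]
    have := hmax _ _ _ hp1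
    simpa using this
  have hba : b ≠ a := by
    intro h
    subst h
    have hnil := SimpleGraph.Walk.isPath_iff_eq_nil.1 hp
    rw [hnil] at hN1
    simp at hN1
  have hsupmem : ∀ z ∈ p.support, ∃ i, p.getVert i = z ∧ i ≤ p.length :=
    fun z hz => SimpleGraph.Walk.mem_support_iff_exists_getVert.1 hz
  have hnbr : ∀ (z t : V), G.Adj z t → ∀ u w, G.neighborSet z = {u, w} → t = u ∨ t = w := by
    intro z t ht u w hset
    have : t ∈ G.neighborSet z := ht
    rw [hset] at this
    simpa using this
  have hN2 : 2 ≤ p.length := by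
    by_contra h
    have hlen1 : p.length = 1 := by omega
    obtain ⟨u, w, huw, hset⟩ := hpair b
    have hu : G.Adj b u := by
      have : u ∈ G.neighborSet b := by rw [hset]; exact Set.mem_insert _ _
      exact this
    have hw : G.Adj b w := by
      have : w ∈ G.neighborSet b := by rw [hset]; exact Set.mem_insert_iff.2 (Or.inr rfl)
      exact this
    have hgv1 : p.getVert 1 = b := by rw [← hlen1]; exact p.getVert_length
    have hend : ∀ z, G.Adj b z → z = a := by
      intro z hz
      obtain ⟨i, hie, hile⟩ := hsupmem z (hclose_end a b p hp rfl z hz)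
      rw [hlen1] at hile
      rcases Nat.le_one_iff_eq_zero_or_eq_one.1 hile with rfl | rfl
      · rw [SimpleGraph.Walk.getVert_zero] at hie
        exact hie.symm
      · rw [hgv1] at hie
        exact absurd hie hz.ne
    exact huw ((hend u hu).trans (hend w hw).symm)
  -- a and b are adjacent
  have hab : G.Adj b a := by
    by_contra habn
    obtain ⟨u, w, huw, hset⟩ := hpair b
    have hu : G.Adj b u := by
      have : u ∈ G.neighborSet b := by rw [hset]; exact Set.mem_insert _ _
      exact this
    have hw : G.Adj b w := by
      have : w ∈ G.neighborSet b := by rw [hset]; exact Set.mem_insert_iff.2 (Or.inr rfl)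
      exact this
    obtain ⟨c, hbc, q, hq⟩ := SimpleGraph.Walk.exists_eq_cons_of_ne hba p.reverse
    have hqpath : q.IsPath ∧ b ∉ q.support := by
      have h' := hp.reverse
      rw [hq, SimpleGraph.Walk.cons_isPath_iff] at h'
      exact h'
    obtain ⟨d, hd, hdc⟩ : ∃ d, G.Adj b d ∧ d ≠ c := by
      rcases hnbr b c hbc u w hset with rfl | rfl
      · exact ⟨w, hw, fun h => huw h.symm⟩
      · exact ⟨u, hu, huw⟩
    have hda : d ≠ a := fun h => habn (h ▸ hd)
    have hdq : d ∈ q.support := by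
      have hds : d ∈ p.support := hclose_end a b p hp rfl d hd
      have hds' : d ∈ p.reverse.support := by
        rwa [SimpleGraph.Walk.support_reverse, List.mem_reverse]
      rw [hq, SimpleGraph.Walk.support_cons] at hds'
      rcases List.mem_cons.1 hds' with h' | h'
      · exact absurd h' hd.ne'
      · exact h'
    obtain ⟨e, f, hef, he, hf⟩ := interior_two_edges hqpath.1 hdq hdc hda
    have hbe : b ≠ e := fun h => hqpath.2 (h ▸ SimpleGraph.Walk.snd_mem_support_of_mem_edges q he)
    have hbf : b ≠ f := fun h => hqpath.2 (h ▸ SimpleGraph.Walk.snd_mem_support_of_mem_edges q hf)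
    have hde : G.Adj d e := q.adj_of_mem_edges he
    have hdf : G.Adj d f := q.adj_of_mem_edges hf
    obtain ⟨u2, w2, hu2w2, hset2⟩ := hpair d
    have hb2 := hnbr d b hd.symm u2 w2 hset2
    have he2 := hnbr d e hde u2 w2 hset2
    have hf2 := hnbr d f hdf u2 w2 hset2
    rcases hb2 with h3 | h3 <;> rcases he2 with h4 | h4 <;> rcases hf2 with h5 | h5 <;>
      first
        | exact hbe (h3.trans h4.symm)
        | exact hbf (h3.trans h5.symm)
        | exact hef (h4.trans h5.symm)
  -- the edge ab is not in p
  have hedge_ab : s(a, b) ∉ p.edges := by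
    intro hmem
    obtain ⟨x, hax, p₂, hpe⟩ := SimpleGraph.Walk.exists_eq_cons_of_ne (Ne.symm hba) p
    have hp2 : p₂.IsPath ∧ a ∉ p₂.support := by
      have h' := hp
      rw [hpe, SimpleGraph.Walk.cons_isPath_iff] at h'
      exact h'
    rw [hpe, SimpleGraph.Walk.edges_cons, List.mem_cons] at hmem
    rcases hmem with h' | h'
    · have hx : x = b := by
        rcases Sym2.eq_iff.1 h' with ⟨-, h''⟩ | ⟨-, h''⟩
        · exact h''.symm
        · exact absurd h'' hba
      subst hx
      have hnil := SimpleGraph.Walk.isPath_iff_eq_nil.1 hp2.1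
      have hl : p.length = 1 := by rw [hpe, hnil]; simp
      omega
    · exact hp2.2 (SimpleGraph.Walk.fst_mem_support_of_mem_edges p₂ h')
  -- the Hamiltonian cycle
  set w0 : G.Walk a a := SimpleGraph.Walk.cons hab.symm p.reverse with hw0def
  have hcyc : w0.IsCycle := by
    apply SimpleGraph.Path.cons_isCycle ⟨p.reverse, hp.reverse⟩ hab.symm
    simpa [SimpleGraph.Walk.edges_reverse, List.mem_reverse] using hedge_ab
  -- all vertices are on p
  have hclosedsup : ∀ z ∈ p.support, ∀ y, G.Adj z y → y ∈ p.support := by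
    intro z hzs y hzy
    by_cases hza : z = a
    · have h' := hclose_end b a p.reverse hp.reverse (by simp) y (hza ▸ hzy)
      rwa [SimpleGraph.Walk.support_reverse, List.mem_reverse] at h'
    · by_cases hzb : z = b
      · exact hclose_end a b p hp rfl y (hzb ▸ hzy)
      · obtain ⟨e, f, hef, he, hf⟩ := interior_two_edges hp hzs hza hzb
        have hes : e ∈ p.support := SimpleGraph.Walk.snd_mem_support_of_mem_edges p he
        have hfs : f ∈ p.support := SimpleGraph.Walk.snd_mem_support_of_mem_edges p hf
        obtain ⟨u2, w2, hu2w2, hset2⟩ := hpair z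
        have hde : G.Adj z e := p.adj_of_mem_edges he
        have hdf : G.Adj z f := p.adj_of_mem_edges hf
        rcases hnbr z y hzy u2 w2 hset2 with h3 | h3
        · rcases hnbr z e hde u2 w2 hset2 with h4 | h4
          · rw [h3, ← h4]; exact hes
          · rcases hnbr z f hdf u2 w2 hset2 with h5 | h5
            · rw [h3, ← h5]; exact hfs
            · exact absurd (h4.trans h5.symm) hef
        · rcases hnbr z e hde u2 w2 hset2 with h4 | h4
          · rcases hnbr z f hdf u2 w2 hset2 with h5 | h5
            · exact absurd (h4.trans h5.symm) hef
            · rw [h3, ← h5]; exact hfs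
          · rw [h3, ← h4]; exact hes
  have hallsup : ∀ z : V, z ∈ p.support := by
    have key : ∀ (x z : V) (wk : G.Walk x z), x ∈ p.support → z ∈ p.support := by
      intro x z wk
      induction wk with
      | nil => exact id
      | cons h q ih => intro hx; exact ih (hclosedsup _ hx _ h)
    intro z
    obtain ⟨wk⟩ := hconn a z
    exact key a z wk p.start_mem_support
  have hallsup0 : ∀ z : V, z ∈ w0.support := by
    intro z
    rw [hw0def, SimpleGraph.Walk.support_cons]
    refine List.mem_cons_of_mem _ ?_
    rw [SimpleGraph.Walk.support_reverse, List.mem_reverse]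
    exact hallsup z
  -- all edges of G are on the cycle
  have hpsub : ∀ ed ∈ p.edges, ed ∈ w0.edges := by
    intro ed hed
    rw [hw0def, SimpleGraph.Walk.edges_cons, List.mem_cons]
    right
    rwa [SimpleGraph.Walk.edges_reverse, List.mem_reverse]
  have habw : s(a, b) ∈ w0.edges := by
    rw [hw0def, SimpleGraph.Walk.edges_cons]
    exact List.mem_cons_self
  have hcyedges : ∀ z : V, ∃ e f, e ≠ f ∧ s(z, e) ∈ w0.edges ∧ s(z, f) ∈ w0.edges := by
    intro z
    by_cases hza : z = a
    · rw [hza]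
      obtain ⟨x, hax, p₂, hpe⟩ := SimpleGraph.Walk.exists_eq_cons_of_ne (Ne.symm hba) p
      have hxp : s(a, x) ∈ p.edges := by
        rw [hpe, SimpleGraph.Walk.edges_cons]
        exact List.mem_cons_self
      refine ⟨b, x, ?_, habw, hpsub _ hxp⟩
      intro h
      apply hedge_ab
      rw [← h] at hxp
      exact hxp
    · by_cases hzb : z = b
      · rw [hzb]
        obtain ⟨c, hbc, q, hq⟩ := SimpleGraph.Walk.exists_eq_cons_of_ne hba p.reverse
        have hcp : s(b, c) ∈ p.edges := by
          have h' : s(b, c) ∈ p.reverse.edges := by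
            rw [hq, SimpleGraph.Walk.edges_cons]
            exact List.mem_cons_self
          rwa [SimpleGraph.Walk.edges_reverse, List.mem_reverse] at h'
        have hswap : s(b, a) = s(a, b) := Sym2.eq_swap
        refine ⟨a, c, ?_, by rw [hswap]; exact habw, hpsub _ hcp⟩
        intro h
        apply hedge_ab
        rw [← h] at hcp
        rwa [Sym2.eq_swap]
      · obtain ⟨e, f, hef, he, hf⟩ := interior_two_edges hp (hallsup z) hza hzb
        exact ⟨e, f, hef, hpsub _ he, hpsub _ hf⟩
  have halledges : ∀ ed ∈ G.edgeSet, ed ∈ w0.edges := by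
    intro ed
    induction ed using Sym2.ind with
    | _ x y =>
      intro hed
      rw [SimpleGraph.mem_edgeSet] at hed
      obtain ⟨e, f, hef, he, hf⟩ := hcyedges x
      have hxe : G.Adj x e := w0.adj_of_mem_edges he
      have hxf : G.Adj x f := w0.adj_of_mem_edges hf
      obtain ⟨u2, w2, hu2w2, hset2⟩ := hpair x
      rcases hnbr x e hxe u2 w2 hset2 with h5 | h5
      · rcases hnbr x f hxf u2 w2 hset2 with h6 | h6
        · exact absurd (h5.trans h6.symm) hef
        · rcases hnbr x y hed u2 w2 hset2 with h4 | h4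
          · rw [h4, ← h5]; exact he
          · rw [h4, ← h6]; exact hf
      · rcases hnbr x f hxf u2 w2 hset2 with h6 | h6
        · rcases hnbr x y hed u2 w2 hset2 with h4 | h4
          · rw [h4, ← h6]; exact hf
          · rw [h4, ← h5]; exact he
        · exact absurd (h5.trans h6.symm) hef
  -- oddness
  have hodd : Odd w0.length := by
    rw [← Nat.not_even_iff_odd]
    intro heven
    have hw0len : w0.length = p.length + 1 := by
      rw [hw0def, SimpleGraph.Walk.length_cons, SimpleGraph.Walk.length_reverse]
    rw [hw0len] at heven
    obtain ⟨k, hk⟩ := heven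
    have hcrit := hG a b hab.symm
    obtain ⟨S, hSind, hScard⟩ := alpha_exists (G.deleteEdges {s(a, b)})
    choose idx hidx hidxle using fun z : V => hsupmem z (hallsup z)
    have hconsec : ∀ i, i < p.length →
        (G.deleteEdges {s(a, b)}).Adj (p.getVert i) (p.getVert (i+1)) := by
      intro i hi
      rw [SimpleGraph.deleteEdges_adj]
      refine ⟨p.adj_getVert_succ hi, ?_⟩
      rw [Set.mem_singleton_iff]
      intro h
      rcases Sym2.eq_iff.1 h with ⟨h1, h2⟩ | ⟨h1, h2⟩
      · have hi0 : i = 0 := by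
          apply path_getVert_inj hp hi.le (Nat.zero_le _)
          rw [SimpleGraph.Walk.getVert_zero]; exact h1
        have hi1 : i + 1 = p.length := by
          apply path_getVert_inj hp (by omega) le_rfl
          rw [SimpleGraph.Walk.getVert_length]; exact h2
        omega
      · have hiN : i = p.length := by
          apply path_getVert_inj hp hi.le le_rfl
          rw [SimpleGraph.Walk.getVert_length]; exact h1
        omega
    have hinj : Set.InjOn (fun z => idx z / 2) ↑S := by
      intro x hx y hy hxyeq
      by_contra hne'
      have hxyeq' : idx x / 2 = idx y / 2 := hxyeq
      have hidne : idx x ≠ idx y := fun h => hne' (by rw [← hidx x, ← hidx y, h])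
      have hxle := hidxle x
      have hyle := hidxle y
      rcases (by omega : idx x + 1 = idx y ∨ idx y + 1 = idx x) with h | h
      · have hadj := hconsec (idx x) (by omega)
        rw [h, hidx x, hidx y] at hadj
        exact hSind x hx y hy hadj
      · have hadj := hconsec (idx y) (by omega)
        rw [h, hidx x, hidx y] at hadj
        exact hSind y hy x hx hadj
    have hcard_upper : S.card ≤ (p.length + 1) / 2 := by
      have himg : S.image (fun z => idx z / 2) ⊆ Finset.range ((p.length + 1) / 2) := by
        intro m hm
        rw [Finset.mem_image] at hm
        obtain ⟨z, hz, rfl⟩ := hm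
        rw [Finset.mem_range]
        have h1 := hidxle z
        omega
      calc S.card = (S.image (fun z => idx z / 2)).card :=
            (Finset.card_image_of_injOn hinj).symm
        _ ≤ (Finset.range ((p.length + 1) / 2)).card := Finset.card_le_card himg
        _ = (p.length + 1) / 2 := Finset.card_range _
    have hTcard : ((Finset.range ((p.length + 1) / 2)).image
        (fun i => p.getVert (2 * i))).card = (p.length + 1) / 2 := by
      rw [Finset.card_image_of_injOn, Finset.card_range]
      intro i hi j hj hij
      rw [Finset.mem_coe, Finset.mem_range] at hi hj
      have := path_getVert_inj hp (i := 2*i) (j := 2*j) (by omega) (by omega) hij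
      omega
    have hTind : ∀ x ∈ (Finset.range ((p.length + 1) / 2)).image (fun i => p.getVert (2 * i)),
        ∀ y ∈ (Finset.range ((p.length + 1) / 2)).image (fun i => p.getVert (2 * i)),
        ¬ G.Adj x y := by
      intro x hx y hy hadj
      rw [Finset.mem_image] at hx hy
      obtain ⟨i, hi, rfl⟩ := hx
      obtain ⟨j, hj, rfl⟩ := hy
      rw [Finset.mem_range] at hi hj
      have hij : i ≠ j := by rintro rfl; exact G.irrefl hadj
      have hedge : s(p.getVert (2*i), p.getVert (2*j)) ∈ w0.edges :=
        halledges _ (G.mem_edgeSet.2 hadj)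
      rw [hw0def, SimpleGraph.Walk.edges_cons, List.mem_cons, SimpleGraph.Walk.edges_reverse,
        List.mem_reverse] at hedge
      rcases hedge with h | h
      · rcases Sym2.eq_iff.1 h with ⟨h1, h2⟩ | ⟨h1, h2⟩
        · have e1 : 2*i = 0 := by
            apply path_getVert_inj hp (by omega) (Nat.zero_le _)
            rw [SimpleGraph.Walk.getVert_zero]; exact h1
          have e2 : 2*j = p.length := by
            apply path_getVert_inj hp (by omega) le_rfl
            rw [SimpleGraph.Walk.getVert_length]; exact h2
          omega
        · have e1 : 2*i = p.length := by
            apply path_getVert_inj hp (by omega) le_rfl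
            rw [SimpleGraph.Walk.getVert_length]; exact h1
          omega
      · obtain ⟨m, hm, hc⟩ := mem_edges_getVert h
        rcases hc with ⟨h1, h2⟩ | ⟨h1, h2⟩
        · have e1 : m = 2*i := path_getVert_inj hp hm.le (by omega) h1
          have e2 : m+1 = 2*j := path_getVert_inj hp (by omega) (by omega) h2
          omega
        · have e1 : m = 2*j := path_getVert_inj hp hm.le (by omega) h1
          have e2 : m+1 = 2*i := path_getVert_inj hp (by omega) (by omega) h2
          omega
    have hTle := le_alpha G _ hTind
    omega
  exact ⟨a, w0, hcyc, hodd, hallsup0, halledges⟩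
end
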